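/- Define a(n) by ∑_{n≥1} a(n) qⁿ = q·∏_{k≥1} (1−q^k)³(1−q^{7k})³ (the Fourier expansion of η(τ)³η(7τ)³ with q = e^{2πiτ}). Then a(n) = 0 whenever n ≡ 3, 5, or 6 (mod 7). -/

import Mathlib

open PowerSeries Finset

noncomputable section Eta37

/-- triangular numbers -/
def tri : ℕ → ℕ
  | 0 => 0
  | k+1 => tri k + k + 1

/-- Gaussian binomial polynomials (as power series over ℤ), defined by the
Pascal recurrence `gb (n+1) (j+1) = gb n (j+1) + X^(n-j) * gb n j`. -/
def gb : ℕ → ℕ → PowerSeries ℤ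
  | 0, 0 => 1
  | 0, _+1 => 0
  | _+1, 0 => 1
  | n+1, j+1 => gb n (j+1) + X^(n-j) * gb n j

lemma gb_zero_right (n : ℕ) : gb n 0 = 1 := by cases n <;> rfl

lemma gb_eq_zero {n j : ℕ} (h : n < j) : gb n j = 0 := by
  induction n generalizing j with
  | zero => match j, h with | j+1, _ => rfl
  | succ n ih =>
    match j, h with
    | j+1, h =>
      rw [gb, ih (by omega), ih (by omega), mul_zero, add_zero]

lemma gb_diag (n : ℕ) : gb n n = 1 := by
  induction n with
  | zero => rfl
  | succ n ih => rw [gb, gb_eq_zero (by omega), Nat.sub_self, pow_zero, one_mul, ih, zero_add]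

/-- `Qf n = ∏_{k=1}^n (1 - X^k)` -/
def Qf (n : ℕ) : PowerSeries ℤ := ∏ k ∈ Finset.Icc 1 n, (1 - X^k)

lemma Qf_zero : Qf 0 = 1 := by simp [Qf]

lemma Qf_succ (n : ℕ) : Qf (n+1) = Qf n * (1 - X^(n+1)) := by
  rw [Qf, Qf, Finset.prod_Icc_succ_top (by omega)]

lemma Qf_split {a b : ℕ} (h : a ≤ b) :
    Qf b = Qf a * ∏ k ∈ Finset.Ioc a b, (1 - (X:PowerSeries ℤ)^k) := by
  have h1 : Finset.Icc 1 a = Finset.Ioc 0 a := rfl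
  have h2 : Finset.Icc 1 b = Finset.Ioc 0 b := rfl
  rw [Qf, Qf, h1, h2, Finset.prod_Ioc_consecutive _ (Nat.zero_le a) h]

lemma constantCoeff_Qf (n : ℕ) : constantCoeff (Qf n) = 1 := by
  rw [Qf, map_prod]
  apply Finset.prod_eq_one
  intro k hk
  simp only [Finset.mem_Icc] at hk
  rw [map_sub, map_one, map_pow, constantCoeff_X, zero_pow (by omega), sub_zero]

lemma Qf_ne_zero (n : ℕ) : Qf n ≠ 0 := by
  intro h
  have := constantCoeff_Qf n
  rw [h, map_zero] at this
  exact one_ne_zero this.symm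

/-- product formula: `Qf j * Qf (n-j) * gb n j = Qf n` -/
lemma prodform : ∀ n j, j ≤ n → Qf j * Qf (n - j) * gb n j = Qf n := by
  intro n
  induction n with
  | zero => intro j hj; interval_cases j; simp [Qf_zero, gb_zero_right]
  | succ n ih =>
    intro j hj
    match j with
    | 0 => simp [Qf_zero, gb_zero_right]
    | j+1 =>
      rw [gb]
      rcases Nat.lt_or_ge j n with hlt | hge
      · -- j+1 ≤ n
        have e1 : n + 1 - (j+1) = n - j := by omega
        have e3 : n - j = (n - (j+1)) + 1 := by omega
        have ih1 := ih (j+1) (by omega)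
        have ih2 := ih j (by omega)
        have euv : (X:PowerSeries ℤ)^(j+1) * X^(n-j) = X^(n+1) := by
          rw [← pow_add]; congr 1; omega
        rw [e1, Qf_succ n]
        rw [show Qf (n-j) = Qf (n-(j+1)) * (1 - X^(n-j)) by rw [e3, Qf_succ, ← e3]] at ih2 ⊢
        rw [Qf_succ j] at ih1 ⊢
        generalize hA : Qf j = A at *
        generalize hB : Qf (n-(j+1)) = B at *
        generalize hu : (X:PowerSeries ℤ)^(j+1) = u at *
        generalize hv : (X:PowerSeries ℤ)^(n-j) = v at *
        generalize hg1 : gb n (j+1) = g1 at *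
        generalize hg0 : gb n j = g0 at *
        calc A * (1-u) * (B * (1-v)) * (g1 + v * g0)
            = (1-v) * (A * (1-u) * B * g1) + v * (1-u) * (A * (B * (1-v)) * g0) := by ring
          _ = (1-v) * Qf n + v * (1-u) * Qf n := by rw [ih1, ih2]
          _ = Qf n * (1 - u * v) := by ring
          _ = Qf n * (1 - X^(n+1)) := by rw [euv]
      · -- j ≥ n, so j = n
        have hj' : j = n := by omega
        subst hj'
        rw [gb_eq_zero (by omega), Nat.sub_self, Nat.sub_self, pow_zero, one_mul, zero_add,
          gb_diag, mul_one, Qf_zero, mul_one]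

lemma QfQf_ne_zero (a b : ℕ) : Qf a * Qf b ≠ 0 :=
  mul_ne_zero (Qf_ne_zero a) (Qf_ne_zero b)

/-- second Pascal recurrence -/
lemma pascalB (n j : ℕ) : gb (n+1) (j+1) = X^(j+1) * gb n (j+1) + gb n j := by
  rcases Nat.lt_or_ge n (j+1) with h | h
  · -- j+1 > n
    rcases Nat.lt_or_ge n j with h2 | h2
    · rw [gb_eq_zero (by omega), gb_eq_zero (by omega), gb_eq_zero (by omega), mul_zero,
        add_zero]
    · have : j = n := by omega
      subst this
      rw [gb_diag, gb_diag, gb_eq_zero (by omega), mul_zero, zero_add]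
  · -- j+1 ≤ n: cancellation via prodform
    apply mul_left_cancel₀ (QfQf_ne_zero (j+1) (n-j))
    have e1 : n + 1 - (j+1) = n - j := by omega
    have key1 : Qf (j+1) * Qf (n-j) * gb (n+1) (j+1) = Qf (n+1) := by
      have := prodform (n+1) (j+1) (by omega)
      rwa [e1] at this
    have key2 : Qf (j+1) * Qf (n-(j+1)) * gb n (j+1) = Qf n := prodform n (j+1) h
    have key3 : Qf j * Qf (n-j) * gb n j = Qf n := prodform n j (by omega)
    have e3 : n - j = (n - (j+1)) + 1 := by omega
    have euv : (X:PowerSeries ℤ)^(j+1) * X^(n-j) = X^(n+1) := by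
      rw [← pow_add]; congr 1; omega
    calc Qf (j+1) * Qf (n-j) * gb (n+1) (j+1) = Qf (n+1) := key1
      _ = Qf n * (1 - X^(n+1)) := Qf_succ n
      _ = X^(j+1) * (1 - X^(n-j)) * Qf n + (1 - X^(j+1)) * Qf n := by
          rw [← euv]; ring
      _ = X^(j+1) * (1 - X^(n-j)) * (Qf (j+1) * Qf (n-(j+1)) * gb n (j+1))
            + (1 - X^(j+1)) * (Qf j * Qf (n-j) * gb n j) := by rw [key2, key3]
      _ = Qf (j+1) * Qf (n-j) * (X^(j+1) * gb n (j+1) + gb n j) := by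
          rw [show Qf (n-j) = Qf (n-(j+1)) * (1 - X^(n-j)) by rw [e3, Qf_succ, ← e3]]
          rw [Qf_succ j]
          ring

/-- double Pascal -/
lemma pascal2 (n j : ℕ) : gb (n+2) (j+2) =
    X^(j+2) * gb n (j+2) + (1 + X^(n+1)) * gb n (j+1) + X^(n-j) * gb n j := by
  have h1 : gb (n+2) (j+2) = X^(j+2) * gb (n+1) (j+2) + gb (n+1) (j+1) := pascalB (n+1) (j+1)
  have h2 : gb (n+1) (j+2) = gb n (j+2) + X^(n-(j+1)) * gb n (j+1) := by rw [gb]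
  have h3 : gb (n+1) (j+1) = gb n (j+1) + X^(n-j) * gb n j := by rw [gb]
  rw [h1, h2, h3]
  rcases Nat.lt_or_ge n (j+1) with h | h
  · rw [gb_eq_zero (show n < j+1 by omega), gb_eq_zero (show n < j+2 by omega)]
    ring
  · have : (X:PowerSeries ℤ)^(j+2) * X^(n-(j+1)) = X^(n+1) := by
      rw [← pow_add]; congr 1; omega
    rw [mul_add, ← mul_assoc, this]
    ring

lemma gb_swap {n a b : ℕ} (h : a + b = n) : gb n a = gb n b := by
  apply mul_left_cancel₀ (QfQf_ne_zero a b)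
  have k1 : Qf a * Qf b * gb n a = Qf n := by
    have := prodform n a (by omega)
    rwa [show n - a = b by omega] at this
  have k2 : Qf b * Qf a * gb n b = Qf n := by
    have := prodform n b (by omega)
    rwa [show n - b = a by omega] at this
  rw [k1, ← k2]; ring

lemma tri_succ (k : ℕ) : tri (k+1) = tri k + k + 1 := rfl

/-- exponent function: `efn N t = C(t - N, 2)` as a ℕ-valued function -/
def efn (N t : ℕ) : ℕ := if t ≤ N then tri (N - t) else tri (t - N - 1)

lemma efn_e1 (N t : ℕ) : efn (N+1) t + t = efn N t + (N+1) := by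
  unfold efn
  rcases Nat.lt_or_ge N t with h | h
  · obtain ⟨k, rfl⟩ : ∃ k, t = N+1+k := ⟨t-N-1, by omega⟩
    match k with
    | 0 =>
      rw [if_pos (by omega), if_neg (by omega), Nat.add_zero, Nat.sub_self,
        show N+1-N-1 = 0 by omega]
    | k+1 =>
      rw [if_neg (by omega), if_neg (by omega), show N+1+(k+1)-(N+1)-1 = k by omega,
        show N+1+(k+1)-N-1 = k+1 by omega, tri_succ]
      generalize tri k = A
      omega
  · obtain ⟨k, rfl⟩ : ∃ k, N = t+k := ⟨N-t, by omega⟩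
    rw [if_pos (by omega), if_pos (by omega), show t+k+1-t = k+1 by omega,
      show t+k-t = k by omega, tri_succ]
    generalize tri k = A
    omega

lemma efn_e2 (N s : ℕ) : efn (N+1) (s+1) = efn N s := by
  unfold efn
  rcases Nat.lt_or_ge N s with h | h
  · rw [if_neg (by omega), if_neg (by omega), show s+1-(N+1)-1 = s-N-1 by omega]
  · rw [if_pos (by omega), if_pos (by omega), show N+1-(s+1) = N-s by omega]

lemma efn_e3 (N s : ℕ) (hs : s ≤ 2*N+1) :
    efn (N+1) (s+2) + (2*N+1-s) = efn N s + (N+1) := by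
  unfold efn
  rcases Nat.lt_or_ge N s with h | h
  · obtain ⟨k, rfl⟩ : ∃ k, s = N+1+k := ⟨s-N-1, by omega⟩
    rw [if_neg (by omega), if_neg (by omega), show N+1+k+2-(N+1)-1 = k+1 by omega,
      show N+1+k-N-1 = k by omega, tri_succ]
    generalize tri k = A
    omega
  · obtain ⟨k, rfl⟩ : ∃ k, N = s+k := ⟨N-s, by omega⟩
    match k with
    | 0 =>
      rw [if_neg (by omega), if_pos (by omega), show s+0-s = 0 by omega,
        show s+2-(s+0+1)-1 = 0 by omega]
      simp only [tri]
      omega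
    | k+1 =>
      rw [if_pos (by omega), if_pos (by omega), show s+(k+1)+1-(s+2) = k by omega,
        show s+(k+1)-s = k+1 by omega, tri_succ]
      generalize tri k = A
      omega

lemma efn_zero (N : ℕ) : efn N 0 = tri N := by simp [efn]

lemma efn_one_exp (N : ℕ) : efn N 1 + (N + 1) = tri N + 1 := by
  unfold efn
  match N with
  | 0 => rw [if_neg (by omega), Nat.sub_self]
  | k+1 =>
    rw [if_pos (by omega), show k+1-1 = k by omega, tri_succ]
    generalize tri k = A
    omega

lemma pascal2_one (n : ℕ) : gb (n+2) 1 = X * gb n 1 + (1 + X^(n+1)) := by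
  have h1 : gb (n+2) 1 = X^1 * gb (n+1) 1 + gb (n+1) 0 := pascalB (n+1) 0
  have h2 : gb (n+1) 1 = gb n 1 + X^(n-0) * gb n 0 := by rw [gb]
  rw [h1, h2, gb_zero_right, gb_zero_right, Nat.sub_zero, mul_one, pow_one, mul_add,
    ← pow_succ']
  ring

/-- the two-sided finite product, as a polynomial in `z` over `ℤ[[X]]` -/
def BP (N : ℕ) : Polynomial (PowerSeries ℤ) :=
  (∏ i ∈ Finset.Icc 1 N, (Polynomial.C (X^i) - Polynomial.X)) *
  (∏ i ∈ Finset.Icc 1 N, (1 - Polynomial.C (X^i) * Polynomial.X))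

def AP (N : ℕ) : Polynomial (PowerSeries ℤ) := (1 - Polynomial.X) * BP N

def cf (N t : ℕ) : PowerSeries ℤ := (-1)^t * (gb (2*N+1) t * X^(efn N t))

lemma AP_succ (N : ℕ) : AP (N+1) = AP N *
    ((Polynomial.C (X^(N+1)) - Polynomial.X) * (1 - Polynomial.C (X^(N+1)) * Polynomial.X)) := by
  unfold AP BP
  rw [Finset.prod_Icc_succ_top (show 1 ≤ N+1 by omega),
    Finset.prod_Icc_succ_top (show 1 ≤ N+1 by omega)]
  ring

lemma AP_coeff (N : ℕ) : ∀ t, (AP N).coeff t = cf N t := by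
  induction N with
  | zero =>
    intro t
    have h0 : AP 0 = 1 - Polynomial.X := by
      unfold AP BP
      rw [show Finset.Icc 1 0 = (∅ : Finset ℕ) from rfl]
      simp
    rw [h0]
    match t with
    | 0 => simp [cf, efn, tri, gb_zero_right]
    | 1 =>
      rw [Polynomial.coeff_sub, Polynomial.coeff_one, Polynomial.coeff_X_one]
      have : gb 1 1 = 1 := gb_diag 1
      simp [cf, efn, tri, this]
    | t+2 =>
      rw [Polynomial.coeff_sub, Polynomial.coeff_one, Polynomial.coeff_X]
      rw [cf, gb_eq_zero (show 2*0+1 < t+2 by omega)]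
      simp
  | succ N ih =>
    intro t
    have hsq : (X:PowerSeries ℤ)^(2*N+2) = X^(N+1)*X^(N+1) := by
      rw [← pow_add]; congr 1; omega
    have expand : AP N * ((Polynomial.C ((X:PowerSeries ℤ)^(N+1)) - Polynomial.X) *
        (1 - Polynomial.C (X^(N+1)) * Polynomial.X)) =
        AP N * Polynomial.C (X^(N+1))
        - (AP N * Polynomial.C (1+X^(2*N+2))) * Polynomial.X^1
        + (AP N * Polynomial.C (X^(N+1))) * Polynomial.X^2 := by
      rw [map_add, map_one, hsq, map_mul]
      ring
    rw [AP_succ, expand, Polynomial.coeff_add, Polynomial.coeff_sub,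
      Polynomial.coeff_mul_X_pow', Polynomial.coeff_mul_X_pow',
      Polynomial.coeff_mul_C, Polynomial.coeff_mul_C, Polynomial.coeff_mul_C,
      ih, ih, ih]
    match t with
    | 0 =>
      rw [if_neg (by omega), if_neg (by omega)]
      simp only [cf, gb_zero_right, pow_zero, one_mul, efn_zero, sub_zero, add_zero]
      rw [← pow_add]
      congr 1
    | 1 =>
      rw [if_pos (by omega), if_neg (by omega)]
      norm_num
      have h2 : 2*(N+1)+1 = (2*N+1)+2 := by omega
      simp only [cf, h2, pascal2_one, efn_zero, gb_zero_right]
      have hE : (X:PowerSeries ℤ)^(efn N 1) * X^(N+1) = X^(tri N) * X^1 := by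
        rw [← pow_add, ← pow_add]
        have := efn_one_exp N
        congr 1
      have hE2 : efn (N+1) 1 = tri N := by
        have := efn_e2 N 0
        rw [this, efn_zero]
      rw [hE2]
      linear_combination (-1 : PowerSeries ℤ) * gb (2*N+1) 1 * hE
    | s+2 =>
      rw [if_pos (by omega), if_pos (by omega),
        show s+2-1 = s+1 by omega, show s+2-2 = s by omega]
      rcases Nat.lt_or_ge (2*N+1) s with hbig | hsok
      · rw [cf, cf, cf, cf, gb_eq_zero (show 2*N+1 < s by omega),
          gb_eq_zero (show 2*N+1 < s+1 by omega), gb_eq_zero (show 2*N+1 < s+2 by omega),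
          gb_eq_zero (show 2*(N+1)+1 < s+2 by omega)]
        simp
      · have h2 : 2*(N+1)+1 = (2*N+1)+2 := by omega
        have E1 : (X:PowerSeries ℤ)^(efn N (s+2)) * X^(N+1)
            = X^(s+2) * X^(efn (N+1) (s+2)) := by
          rw [← pow_add, ← pow_add]
          have := efn_e1 N (s+2)
          congr 1
          omega
        have E3 : (X:PowerSeries ℤ)^(efn N s) * X^(N+1)
            = X^(2*N+1-s) * X^(efn (N+1) (s+2)) := by
          rw [← pow_add, ← pow_add]
          have := efn_e3 N s hsok
          congr 1
          omega
        have E2 : efn N (s+1) = efn (N+1) (s+2) := (efn_e2 N (s+1)).symm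
        simp only [cf, h2, pascal2 (2*N+1) s, E2]
        linear_combination ((-1 : PowerSeries ℤ))^s * gb (2*N+1) (s+2) * E1
          + ((-1 : PowerSeries ℤ))^s * gb (2*N+1) s * E3

lemma AP_as_sum (N : ℕ) :
    AP N = ∑ t ∈ Finset.range (2*N+2), Polynomial.C (cf N t) * Polynomial.X ^ t := by
  apply Polynomial.ext
  intro n
  rw [AP_coeff, Polynomial.finset_sum_coeff]
  have hterm : ∀ t, (Polynomial.C (cf N t) * Polynomial.X ^ t).coeff n
      = if n = t then cf N t else 0 := by
    intro t
    rw [Polynomial.coeff_C_mul, Polynomial.coeff_X_pow]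
    split
    · rw [mul_one]
    · rw [mul_zero]
  rw [Finset.sum_congr rfl (fun t _ => hterm t), Finset.sum_eq_single n]
  · rw [if_pos rfl]
  · intro b _ hb
    rw [if_neg (fun h => hb h.symm)]
  · intro hn
    rw [if_pos rfl, cf, gb_eq_zero (show 2*N+1 < n by
      simp only [Finset.mem_range] at hn; omega)]
    ring

lemma BP_eval_one (N : ℕ) : Polynomial.eval 1 (BP N) = (-1)^N * Qf N ^ 2 := by
  unfold BP
  rw [Polynomial.eval_mul, Polynomial.eval_prod, Polynomial.eval_prod]
  have h1 : ∀ i ∈ Finset.Icc 1 N,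
      Polynomial.eval 1 (Polynomial.C ((X:PowerSeries ℤ)^i) - Polynomial.X)
      = (-1) * (1 - X^i) := by
    intro i _
    rw [Polynomial.eval_sub, Polynomial.eval_C, Polynomial.eval_X]
    ring
  have h2 : ∀ i ∈ Finset.Icc 1 N,
      Polynomial.eval 1 (1 - Polynomial.C ((X:PowerSeries ℤ)^i) * Polynomial.X)
      = 1 - X^i := by
    intro i _
    rw [Polynomial.eval_sub, Polynomial.eval_one, Polynomial.eval_mul, Polynomial.eval_C,
      Polynomial.eval_X, mul_one]
  rw [Finset.prod_congr rfl h1, Finset.prod_congr rfl h2, Finset.prod_mul_distrib,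
    Finset.prod_const, Nat.card_Icc]
  rw [Qf]
  rw [show N + 1 - 1 = N by omega]
  ring

/-- the main identity: `Qf N ^ 2` as a sum of Gaussian-binomial terms -/
lemma main_identity (N : ℕ) : Qf N ^ 2 =
    ∑ t ∈ Finset.range (2*N+2),
      ((-1)^(N+1+t) * (t:ℤ)) • (gb (2*N+1) t * X^(efn N t)) := by
  have hL : Polynomial.eval 1 (Polynomial.derivative (AP N)) = -((-1)^N * Qf N ^ 2) := by
    unfold AP
    rw [Polynomial.derivative_mul, Polynomial.eval_add, Polynomial.eval_mul,
      Polynomial.eval_mul]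
    rw [show Polynomial.derivative (1 - Polynomial.X : Polynomial (PowerSeries ℤ))
        = Polynomial.C (-1) by
      rw [Polynomial.derivative_sub, Polynomial.derivative_one, Polynomial.derivative_X]
      simp]
    rw [Polynomial.eval_C, Polynomial.eval_sub, Polynomial.eval_one, Polynomial.eval_X,
      sub_self, zero_mul, add_zero, BP_eval_one]
    ring
  have hR : Polynomial.eval 1 (Polynomial.derivative (AP N))
      = ∑ t ∈ Finset.range (2*N+2), (t:ℤ) • cf N t := by
    rw [AP_as_sum, map_sum Polynomial.derivative _ _, Polynomial.eval_finset_sum]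
    apply Finset.sum_congr rfl
    intro t _
    rw [Polynomial.derivative_C_mul_X_pow, Polynomial.eval_mul, Polynomial.eval_C,
      Polynomial.eval_pow, Polynomial.eval_X, one_pow, mul_one]
    rw [zsmul_eq_mul]
    push_cast
    ring
  have key : -((-1:PowerSeries ℤ))^N * Qf N ^ 2
      = ∑ t ∈ Finset.range (2*N+2), (t:ℤ) • cf N t := by
    rw [← hR, hL]; ring
  have step : Qf N ^ 2 = (-1)^(N+1) * ∑ t ∈ Finset.range (2*N+2), (t:ℤ) • cf N t := by
    rw [← key, pow_succ]
    have : ((-1:PowerSeries ℤ))^N * (-1)^N = 1 := by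
      rw [← pow_add]
      exact Even.neg_one_pow ⟨N, by ring⟩
    calc Qf N ^2 = ((-1:PowerSeries ℤ))^N * (-1)^N * Qf N ^2 := by rw [this]; ring
      _ = (-1)^N * -1 * (-(-1) ^ N * Qf N ^ 2) := by ring
  rw [step, Finset.mul_sum]
  apply Finset.sum_congr rfl
  intro t _
  rw [cf, zsmul_eq_mul, zsmul_eq_mul]
  push_cast
  rw [pow_add]
  ring

/-- coefficientwise congruence up to degree `M` -/
def Emod (M : ℕ) (A B : PowerSeries ℤ) : Prop := ∀ i ≤ M, coeff i A = coeff i B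

lemma Emod_refl (M : ℕ) (A : PowerSeries ℤ) : Emod M A A := fun _ _ => rfl

lemma Emod_trans {M : ℕ} {A B C : PowerSeries ℤ} (h1 : Emod M A B) (h2 : Emod M B C) :
    Emod M A C := fun i hi => (h1 i hi).trans (h2 i hi)

lemma Emod_mul {M : ℕ} {A A' B B' : PowerSeries ℤ} (hA : Emod M A A') (hB : Emod M B B') :
    Emod M (A * B) (A' * B') := by
  intro i hi
  rw [coeff_mul, coeff_mul]
  apply Finset.sum_congr rfl
  intro p hp
  rw [Finset.HasAntidiagonal.mem_antidiagonal] at hp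
  rw [hA p.1 (by omega), hB p.2 (by omega)]

lemma Emod_one_mul {M : ℕ} {u : PowerSeries ℤ} (hu : Emod M u 1) (A : PowerSeries ℤ)
    {i : ℕ} (hi : i ≤ M) : coeff i (u * A) = coeff i A := by
  rw [coeff_mul]
  have hterm : ∀ p ∈ Finset.HasAntidiagonal.antidiagonal i,
      coeff p.1 u * coeff p.2 A = (if p.1 = 0 then 1 else 0) * coeff p.2 A := by
    intro p hp
    rw [Finset.HasAntidiagonal.mem_antidiagonal] at hp
    rw [hu p.1 (by omega), coeff_one]
  rw [Finset.sum_congr rfl hterm, Finset.sum_eq_single ((0 : ℕ), i)]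
  · rw [if_pos rfl, one_mul]
  · intro b hb hbne
    rw [Finset.HasAntidiagonal.mem_antidiagonal] at hb
    have hb1 : b.1 ≠ 0 := by
      intro h0
      apply hbne
      have h2 : b.2 = i := by omega
      rw [Prod.ext_iff]
      exact ⟨h0, h2⟩
    rw [if_neg hb1, zero_mul]
  · intro hni
    exact absurd (Finset.HasAntidiagonal.mem_antidiagonal.2 (by omega)) hni

lemma Emod_cancel {M : ℕ} {u v A B : PowerSeries ℤ} (hu : Emod M u 1) (hv : Emod M v 1)
    (h : u * A = v * B) : Emod M A B := by
  intro i hi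
  rw [← Emod_one_mul hu A hi, h, Emod_one_mul hv B hi]

lemma Emod_prod_one {M : ℕ} (s : Finset ℕ) (hs : ∀ k ∈ s, M < k) :
    Emod M (∏ k ∈ s, (1 - (X:PowerSeries ℤ)^k)) 1 := by
  classical
  induction s using Finset.induction_on with
  | empty => rw [Finset.prod_empty]; exact Emod_refl M 1
  | @insert a s' hx ih =>
    rw [Finset.prod_insert hx]
    have h1 : Emod M (1 - (X:PowerSeries ℤ)^a) 1 := by
      intro i hi
      rw [map_sub, coeff_X_pow,
        if_neg (by have := hs a (Finset.mem_insert_self a s'); omega), sub_zero]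
    have h2 := ih (fun k hk => hs k (Finset.mem_insert_of_mem hk))
    have h3 := Emod_mul h1 h2
    rwa [one_mul] at h3

lemma tri_ge (k : ℕ) : k ≤ tri k := by
  induction k with
  | zero => simp [tri]
  | succ k ih => rw [tri_succ]; omega

lemma two_tri (k : ℕ) : 2 * tri k = k * (k+1) := by
  induction k with
  | zero => simp [tri]
  | succ k ih =>
    rw [tri_succ]
    have : (k+1) * ((k+1)+1) = k * (k+1) + 2*(k+1) := by ring
    omega

lemma tri_ne_of_mod7 {m : ℕ} (hm : m % 7 = 2 ∨ m % 7 = 4 ∨ m % 7 = 5) (k : ℕ) :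
    tri k ≠ m := by
  intro he
  have h2 : 2 * m = k * (k+1) := by rw [← he, two_tri]
  have h1 : k ≡ k % 7 [MOD 7] := (Nat.mod_modEq k 7).symm
  have hmul : k*(k+1) ≡ (k%7)*((k%7)+1) [MOD 7] := Nat.ModEq.mul h1 (Nat.ModEq.add_right 1 h1)
  have h3 : (k*(k+1)) % 7 = ((k%7)*((k%7)+1)) % 7 := hmul
  rw [← h2] at h3
  have h4 : k % 7 < 7 := Nat.mod_lt _ (by norm_num)
  set r := k % 7 with hr
  interval_cases r <;> omega

/-- congruence between central Gaussian binomials -/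
lemma gb_cong_aux {N M a : ℕ} (hM : M < a) (ha : a ≤ N) :
    Emod M (gb (2*N+1) a) (gb (2*N+1) N) := by
  set b := 2*N+1-a with hb
  have hab : a + b = 2*N+1 := by omega
  have key1 : Qf a * Qf b * gb (2*N+1) a = Qf (2*N+1) := by
    have := prodform (2*N+1) a (by omega)
    rwa [show 2*N+1-a = b from rfl] at this
  have key2 : Qf N * Qf (N+1) * gb (2*N+1) N = Qf (2*N+1) := by
    have := prodform (2*N+1) N (by omega)
    rwa [show 2*N+1-N = N+1 by omega] at this
  have hbN : N+1 ≤ b := by omega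
  have split1 : Qf N = Qf a * ∏ k ∈ Finset.Ioc a N, (1 - (X:PowerSeries ℤ)^k) := Qf_split ha
  have split2 : Qf b = Qf (N+1) * ∏ k ∈ Finset.Ioc (N+1) b, (1 - (X:PowerSeries ℤ)^k) :=
    Qf_split hbN
  apply Emod_cancel (u := ∏ k ∈ Finset.Ioc (N+1) b, (1 - (X:PowerSeries ℤ)^k))
    (v := ∏ k ∈ Finset.Ioc a N, (1 - (X:PowerSeries ℤ)^k))
  · apply Emod_prod_one
    intro k hk
    rw [Finset.mem_Ioc] at hk
    omega
  · apply Emod_prod_one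
    intro k hk
    rw [Finset.mem_Ioc] at hk
    omega
  · apply mul_left_cancel₀ (QfQf_ne_zero a (N+1))
    calc Qf a * Qf (N+1) *
          ((∏ k ∈ Finset.Ioc (N+1) b, (1 - (X:PowerSeries ℤ)^k)) * gb (2*N+1) a)
        = Qf a * (Qf (N+1) * ∏ k ∈ Finset.Ioc (N+1) b, (1 - (X:PowerSeries ℤ)^k))
            * gb (2*N+1) a := by ring
      _ = Qf a * Qf b * gb (2*N+1) a := by rw [← split2]
      _ = Qf (2*N+1) := key1
      _ = Qf N * Qf (N+1) * gb (2*N+1) N := key2.symm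
      _ = Qf a * (∏ k ∈ Finset.Ioc a N, (1 - (X:PowerSeries ℤ)^k)) * Qf (N+1)
            * gb (2*N+1) N := by rw [← split1]
      _ = Qf a * Qf (N+1) *
          ((∏ k ∈ Finset.Ioc a N, (1 - (X:PowerSeries ℤ)^k)) * gb (2*N+1) N) := by ring

lemma gb_cong {N M a : ℕ} (hle : a ≤ 2*N+1) (ha : M < a) (hb : M < 2*N+1-a) :
    Emod M (gb (2*N+1) a) (gb (2*N+1) N) := by
  rcases le_or_gt a N with h | h
  · exact gb_cong_aux ha h
  · rw [gb_swap (show a + (2*N+1-a) = 2*N+1 by omega)]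
    exact gb_cong_aux hb (by omega)

lemma coeff_mul_X_pow_eq_zero {g : PowerSeries ℤ} {i e : ℕ} (h : i < e) :
    coeff i (g * X^e) = 0 := by
  rw [coeff_mul]
  apply Finset.sum_eq_zero
  intro p hp
  rw [Finset.HasAntidiagonal.mem_antidiagonal] at hp
  rw [coeff_X_pow, if_neg (by omega), mul_zero]

/-- Key lemma: coefficients of `(∏(1-X^k))³` vanish on classes 2,4,5 mod 7. -/
lemma cube_support {m N : ℕ} (hN : 2*m+1 ≤ N)
    (hm7 : m % 7 = 2 ∨ m % 7 = 4 ∨ m % 7 = 5) :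
    coeff m (Qf N ^ 3) = 0 := by
  set W : PowerSeries ℤ :=
    ∑ t ∈ Finset.range (2*N+2), ((-1)^(N+1+t) * (t:ℤ)) • ((X:PowerSeries ℤ)^(efn N t))
    with hWdef
  have step1 : Emod m (Qf N ^ 2) (gb (2*N+1) N * W) := by
    rw [main_identity N]
    have hW : gb (2*N+1) N * W = ∑ t ∈ Finset.range (2*N+2),
        ((-1)^(N+1+t) * (t:ℤ)) • (gb (2*N+1) N * (X:PowerSeries ℤ)^(efn N t)) := by
      rw [hWdef, Finset.mul_sum]
      apply Finset.sum_congr rfl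
      intro t _
      rw [mul_smul_comm]
    rw [hW]
    intro i hi
    rw [map_sum, map_sum]
    apply Finset.sum_congr rfl
    intro t ht
    rw [Finset.mem_range] at ht
    rw [map_smul, map_smul]
    congr 1
    rcases Nat.lt_or_ge i (efn N t) with hlt | hge
    · rw [coeff_mul_X_pow_eq_zero hlt, coeff_mul_X_pow_eq_zero hlt]
    · have hem : efn N t ≤ m := le_trans hge hi
      have hbound : m < t ∧ m < 2*N+1-t := by
        by_cases h : t ≤ N
        · have h1 : tri (N - t) ≤ m := by rwa [efn, if_pos h] at hem
          have h2 := tri_ge (N - t)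
          omega
        · have h1 : tri (t - N - 1) ≤ m := by rwa [efn, if_neg h] at hem
          have h2 := tri_ge (t - N - 1)
          omega
      exact Emod_mul (gb_cong (by omega) hbound.1 hbound.2) (Emod_refl m _) i hi
  have hu : Qf N * gb (2*N+1) N
      = ∏ k ∈ Finset.Ioc (N+1) (2*N+1), (1 - (X:PowerSeries ℤ)^k) := by
    apply mul_left_cancel₀ (Qf_ne_zero (N+1))
    have key2 : Qf N * Qf (N+1) * gb (2*N+1) N = Qf (2*N+1) := by
      have := prodform (2*N+1) N (by omega)
      rwa [show 2*N+1-N = N+1 by omega] at this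
    calc Qf (N+1) * (Qf N * gb (2*N+1) N) = Qf N * Qf (N+1) * gb (2*N+1) N := by ring
      _ = Qf (2*N+1) := key2
      _ = Qf (N+1) * ∏ k ∈ Finset.Ioc (N+1) (2*N+1), (1 - (X:PowerSeries ℤ)^k) :=
          Qf_split (by omega)
  have step3 : Emod m (Qf N ^ 3) W := by
    intro i hi
    have h1 : Emod m (Qf N * Qf N ^ 2) (Qf N * (gb (2*N+1) N * W)) :=
      Emod_mul (Emod_refl m (Qf N)) step1
    have h2 : Qf N * (gb (2*N+1) N * W)
        = (∏ k ∈ Finset.Ioc (N+1) (2*N+1), (1 - (X:PowerSeries ℤ)^k)) * W := by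
      rw [← mul_assoc, hu]
    have h3 : Emod m ((∏ k ∈ Finset.Ioc (N+1) (2*N+1), (1 - (X:PowerSeries ℤ)^k)) * W)
        (1 * W) :=
      Emod_mul (Emod_prod_one _ (fun k hk => by rw [Finset.mem_Ioc] at hk; omega))
        (Emod_refl m W)
    rw [show Qf N ^ 3 = Qf N * Qf N ^ 2 by ring, h1 i hi, h2, h3 i hi, one_mul]
  rw [step3 m le_rfl, hWdef, map_sum]
  apply Finset.sum_eq_zero
  intro t _
  have hne : efn N t ≠ m := by
    unfold efn
    split
    · exact tri_ne_of_mod7 hm7 _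
    · exact tri_ne_of_mod7 hm7 _
  rw [map_smul, coeff_X_pow, if_neg (fun hh => hne hh.symm), smul_zero]

/-- series supported on multiples of 7 -/
def P7 (A : PowerSeries ℤ) : Prop := ∀ j, ¬ (7 ∣ j) → coeff j A = 0

lemma P7_mul {A B : PowerSeries ℤ} (hA : P7 A) (hB : P7 B) : P7 (A * B) := by
  intro j hj
  rw [coeff_mul]
  apply Finset.sum_eq_zero
  intro p hp
  rw [Finset.HasAntidiagonal.mem_antidiagonal] at hp
  by_cases h : 7 ∣ p.1
  · have h2 : ¬ 7 ∣ p.2 := by omega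
    rw [hB p.2 h2, mul_zero]
  · rw [hA p.1 h, zero_mul]

lemma P7_one : P7 1 := by
  intro j hj
  rw [coeff_one, if_neg (by omega)]

lemma P7_base (k : ℕ) : P7 (1 - (X:PowerSeries ℤ)^(7*k)) := by
  intro j hj
  rw [map_sub, coeff_one, coeff_X_pow, if_neg (by omega), if_neg (by
    intro h
    exact hj ⟨k, h⟩), sub_zero]

lemma P7_prod (N : ℕ) : P7 (∏ k ∈ Finset.Icc 1 N, (1 - (X:PowerSeries ℤ)^(7*k))) := by
  classical
  induction N with
  | zero => rw [show Finset.Icc 1 0 = (∅ : Finset ℕ) from rfl, Finset.prod_empty]; exact P7_one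
  | succ N ih =>
    rw [Finset.prod_Icc_succ_top (show 1 ≤ N+1 by omega)]
    exact P7_mul ih (P7_base (N+1))

lemma P7_pow3 (N : ℕ) : ∀ j, ¬ (7 ∣ j) →
    coeff j ((∏ k ∈ Finset.Icc 1 N, (1 - (X:PowerSeries ℤ)^(7*k)))^3) = 0 := by
  have h := P7_prod N
  have h3 : P7 ((∏ k ∈ Finset.Icc 1 N, (1 - (X:PowerSeries ℤ)^(7*k)))^3) := by
    rw [show ∀ (A : PowerSeries ℤ), A^3 = A*A*A from fun A => by ring]
    exact P7_mul (P7_mul h h) h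
  exact h3

end Eta37

/-- The coefficients of `η(τ)³η(7τ)³ = q∏(1−q^k)³(1−q^{7k})³` vanish on the
classes `3, 5, 6 (mod 7)`. -/
theorem eta3_eta7_3_vanishing (a : ℕ → ℤ)
    (ha : ∀ n N : ℕ, n ≤ N →
      a n = (PowerSeries.coeff (R := ℤ) n)
        (PowerSeries.X *
          ∏ k ∈ Finset.Icc 1 N,
            ((1 - PowerSeries.X ^ k) ^ 3 * (1 - PowerSeries.X ^ (7 * k)) ^ 3))) :
    ∀ n : ℕ, (n % 7 = 3 ∨ n % 7 = 5 ∨ n % 7 = 6) → a n = 0 := by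
  intro n hn
  have hn1 : 1 ≤ n := by omega
  set N := 2*n+2 with hNdef
  rw [ha n N (by omega)]
  rw [Finset.prod_mul_distrib, Finset.prod_pow, Finset.prod_pow]
  obtain ⟨n', rfl⟩ : ∃ n', n = n' + 1 := ⟨n - 1, by omega⟩
  rw [coeff_succ_X_mul, coeff_mul]
  apply Finset.sum_eq_zero
  intro p hp
  rw [Finset.HasAntidiagonal.mem_antidiagonal] at hp
  by_cases h7 : 7 ∣ p.2
  · have hm7 : p.1 % 7 = 2 ∨ p.1 % 7 = 4 ∨ p.1 % 7 = 5 := by omega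
    have hc : coeff p.1 (Qf N ^ 3) = 0 := cube_support (by omega) hm7
    rw [Qf] at hc
    rw [hc, zero_mul]
  · rw [P7_pow3 N p.2 h7, mul_zero]
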